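/- The series K(x) satisfies the third-order linear q-difference equation K(x) - K(xq) + (xq²/(1-xq²))·K(xq²) - (x³q⁶/((1-xq)(1-xq²)(1-xq³)))·K(xq³) = 0, where K(x) = Σ_{n≥0} (x^n q^{n(n+1)/2} / (xq;q)_n) · Σ_{k=0}^{n} (-1)^k/(q;q)_k. -/

import Mathlib

open PowerSeries

noncomputable section
namespace FC

/-- The field `ℚ(q)` of rational functions in `q`. -/
abbrev K : Type := RatFunc ℚ

/-- The variable `q`. -/
def q : K := RatFunc.X

/-- The q-Pochhammer symbol `(a; q)_n = ∏_{i=0}^{n-1} (1 - a q^i)`. -/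
def poch (a : K) (n : ℕ) : K := ∏ i ∈ Finset.range n, (1 - a * q ^ i)

/-- The power series `(x q^s; q)_n = ∏_{i=0}^{n-1} (1 - q^{s+i} x)` in the variable `x`. -/
def pochX (s n : ℕ) : PowerSeries K :=
  ∏ i ∈ Finset.range n, (1 - PowerSeries.C (q ^ (s + i)) * PowerSeries.X)

/-- `J(x) = Σ_{n≥0} (-x)^n q^{C(n,2)} / ((q;q)_n (xq;q)_n)`, defined coefficientwise:
the coefficient of `x^N` is `Σ_{n=0}^{N} (-1)^n q^{C(n,2)}/(q;q)_n · [x^{N-n}] (xq;q)_n⁻¹`. -/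
def J : PowerSeries K :=
  PowerSeries.mk fun N => ∑ n ∈ Finset.range (N + 1),
    ((-1 : K) ^ n * q ^ n.choose 2 / poch q n) * PowerSeries.coeff (N - n) (pochX 1 n)⁻¹

/-- `H(x) = Σ_{n≥0} (-x)^n q^{C(n,2)} / ((q;q)_n (x;q)_n)`. -/
def H : PowerSeries K :=
  PowerSeries.mk fun N => ∑ n ∈ Finset.range (N + 1),
    ((-1 : K) ^ n * q ^ n.choose 2 / poch q n) * PowerSeries.coeff (N - n) (pochX 0 n)⁻¹

/-- `K(x) = Σ_{n≥0} (x^n q^{n(n+1)/2} / (xq;q)_n) · Σ_{k=0}^n (-1)^k/(q;q)_k`. -/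
def Kq : PowerSeries K :=
  PowerSeries.mk fun N => ∑ n ∈ Finset.range (N + 1),
    (q ^ (n * (n + 1) / 2) * ∑ k ∈ Finset.range (n + 1), (-1 : K) ^ k / poch q k) *
      PowerSeries.coeff (N - n) (pochX 1 n)⁻¹

-- scalar lemmas
lemma q_mul_pow_ne_one (k : ℕ) : q * q ^ k ≠ 1 := by
  intro h
  have h2 : algebraMap (Polynomial ℚ) (RatFunc ℚ) (Polynomial.X ^ (k+1))
      = algebraMap (Polynomial ℚ) (RatFunc ℚ) 1 := by
    rw [map_one, map_pow, RatFunc.algebraMap_X]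
    show (q:K)^(k+1) = 1
    rw [pow_succ, mul_comm]; exact h
  have h3 := RatFunc.algebraMap_injective ℚ h2
  have h4 := Polynomial.natDegree_X_pow (R := ℚ) (k+1)
  rw [h3] at h4
  simp at h4

lemma one_sub_ne (k : ℕ) : (1:K) - q * q ^ k ≠ 0 :=
  fun h => q_mul_pow_ne_one k (sub_eq_zero.mp h).symm

lemma poch_succ (n : ℕ) : poch q (n+1) = poch q n * (1 - q * q ^ n) :=
  Finset.prod_range_succ _ _

lemma poch_ne_zero (n : ℕ) : poch q n ≠ 0 := by
  induction n with
  | zero => simp [poch]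
  | succ n ih => rw [poch_succ]; exact mul_ne_zero ih (one_sub_ne n)

lemma choose_two_succ (n : ℕ) : (n+1).choose 2 = n.choose 2 + n := by
  cases n with
  | zero => rfl
  | succ m =>
    rw [Nat.choose_two_right, Nat.choose_two_right, Nat.add_sub_cancel, Nat.add_sub_cancel,
      ← Nat.add_mul_div_left _ _ (by norm_num : 0 < 2)]
    congr 1
    ring

lemma tri_succ (n : ℕ) : (n+1)*(n+1+1)/2 = n*(n+1)/2 + (n+1) := by
  rw [← Nat.add_mul_div_left _ _ (by norm_num : 0 < 2)]
  congr 1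
  ring

lemma choose_two_add (n : ℕ) : (n+1).choose 2 + (n+1) = (n+1)*(n+1+1)/2 := by
  rw [tri_succ, Nat.choose_two_right, Nat.add_sub_cancel, Nat.mul_comm]


def Sq (n : ℕ) : K := ∑ k ∈ Finset.range (n+1), (-1:K)^k / poch q k
def vj (n : ℕ) : K := (-1:K)^n * q ^ n.choose 2 / poch q n

lemma Sq_succ (n : ℕ) : Sq (n+1) = Sq n + (-1:K)^(n+1) / poch q (n+1) :=
  Finset.sum_range_succ _ _

lemma scalarA (n : ℕ) :
    q ^ ((n+1)*(n+1+1)/2) * Sq (n+1) - vj (n+1) * q^(n+1)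
      = q ^ ((n+1)*(n+1+1)/2) * Sq n := by
  rw [Sq_succ, vj,
    show q ^ ((n+1)*(n+1+1)/2) = q ^ ((n+1).choose 2) * q^(n+1) by
      rw [← pow_add, choose_two_add]]
  ring

lemma vj_rec (n : ℕ) : vj (n+1) * (1 - q^(n+1)) = -(q^n * vj n) := by
  rw [vj, vj, poch_succ, choose_two_succ, pow_add, pow_succ']
  have h1 : poch q n ≠ 0 := poch_ne_zero n
  have h2 : (1 : K) - q * q^n ≠ 0 := one_sub_ne n
  field_simp
  ring

-- pochX structure
lemma constantCoeff_pochX (s n : ℕ) : constantCoeff (pochX s n) = 1 := by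
  rw [pochX, map_prod]
  apply Finset.prod_eq_one
  intro i _
  simp

lemma pochX_zero (s : ℕ) : pochX s 0 = 1 := Finset.prod_range_zero _

lemma pochX_succ_left (s n : ℕ) :
    pochX s (n+1) = (1 - C (q^s) * X) * pochX (s+1) n := by
  rw [pochX, Finset.prod_range_succ', mul_comm, Nat.add_zero]
  congr 1
  rw [pochX]
  exact Finset.prod_congr rfl fun i _ => by rw [show s+(i+1) = s+1+i by omega]

lemma pochX_succ_right (s n : ℕ) :
    pochX s (n+1) = pochX s n * (1 - C (q^(s+n)) * X) :=
  Finset.prod_range_succ _ _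

lemma rescale_C' (a b : K) : rescale a (C b) = C b := by
  ext n
  cases n with
  | zero => simp [coeff_rescale]
  | succ m => simp [coeff_rescale, PowerSeries.coeff_C]

lemma rescale_pochX (s n : ℕ) : rescale q (pochX s n) = pochX (s+1) n := by
  rw [pochX, map_prod, pochX]
  refine Finset.prod_congr rfl fun i _ => ?_
  rw [map_sub, map_one, map_mul, rescale_C', rescale_X, ← mul_assoc, ← map_mul,
    show q^(s+i)*q = q^(s+1+i) by rw [← pow_succ]; congr 1; omega]

-- inverses
lemma one_inv' : (1 : PowerSeries K)⁻¹ = 1 :=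
  ((PowerSeries.eq_inv_iff_mul_eq_one (by simp)).mpr (one_mul 1)).symm

lemma rescale_inv (a : K) (f : PowerSeries K) (h : constantCoeff f ≠ 0) :
    rescale a f⁻¹ = (rescale a f)⁻¹ := by
  have h2 : constantCoeff (rescale a f) ≠ 0 := by
    rwa [← coeff_zero_eq_constantCoeff, coeff_rescale, pow_zero, one_mul,
      coeff_zero_eq_constantCoeff]
  rw [PowerSeries.eq_inv_iff_mul_eq_one h2, ← map_mul, PowerSeries.inv_mul_cancel _ h, map_one]

lemma pochX_inv_mul (s n : ℕ) :
    (1 - C (q^s) * X) * (pochX s (n+1))⁻¹ = (pochX (s+1) n)⁻¹ := by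
  rw [pochX_succ_left, PowerSeries.mul_inv_rev]
  calc (1 - C (q^s)*X) * ((pochX (s+1) n)⁻¹ * (1 - C (q^s)*X)⁻¹)
      = (pochX (s+1) n)⁻¹ * ((1 - C (q^s)*X) * (1 - C (q^s)*X)⁻¹) := by ring
    _ = (pochX (s+1) n)⁻¹ := by rw [PowerSeries.mul_inv_cancel _ (by simp), mul_one]

lemma pochX_inv_succ (s n : ℕ) :
    (pochX s n)⁻¹ = (1 - C (q^(s+n)) * X) * (pochX s (n+1))⁻¹ := by
  rw [pochX_succ_right, PowerSeries.mul_inv_rev, ← mul_assoc,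
    PowerSeries.mul_inv_cancel _ (by simp), one_mul]


def tK (n : ℕ) : PowerSeries K := C (q ^ (n*(n+1)/2) * Sq n) * X ^ n * (pochX 1 n)⁻¹
def tH (n : ℕ) : PowerSeries K := C (vj n) * X ^ n * (pochX 0 n)⁻¹
def tJ (n : ℕ) : PowerSeries K := C (vj n) * X ^ n * (pochX 1 n)⁻¹

lemma cc_poch_ne (s n : ℕ) : constantCoeff (pochX s n) ≠ 0 := by
  rw [constantCoeff_pochX]; exact one_ne_zero

lemma rescale_poch_inv0 (n : ℕ) : rescale q ((pochX 0 n)⁻¹) = (pochX 1 n)⁻¹ := by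
  rw [rescale_inv q _ (cc_poch_ne 0 n), rescale_pochX]

lemma rescale_poch_inv1 (n : ℕ) : rescale q ((pochX 1 n)⁻¹) = (pochX 2 n)⁻¹ := by
  rw [rescale_inv q _ (cc_poch_ne 1 n), rescale_pochX]

lemma rescale_tH (n : ℕ) :
    rescale q (tH n) = C (vj n * q^n) * X^n * (pochX 1 n)⁻¹ := by
  rw [tH, map_mul, map_mul, rescale_C', rescale_poch_inv0, map_pow, rescale_X, map_mul, map_pow]
  ring

lemma rescale_tJ (n : ℕ) :
    rescale q (tJ n) = C (vj n * q^n) * X^n * (pochX 2 n)⁻¹ := by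
  rw [tJ, map_mul, map_mul, rescale_C', rescale_poch_inv1, map_pow, rescale_X, map_mul, map_pow]
  ring

lemma rescale_tK (n : ℕ) :
    rescale q (tK n) = C (q ^ (n*(n+1)/2) * Sq n * q^n) * X^n * (pochX 2 n)⁻¹ := by
  rw [tK, map_mul, map_mul, rescale_C', rescale_poch_inv1, map_pow, rescale_X]
  rw [show C (q ^ (n*(n+1)/2) * Sq n * q^n) = C (q ^ (n*(n+1)/2) * Sq n) * (C q)^n by
    rw [map_mul, map_pow]]
  ring

lemma TA0 : tK 0 - rescale q (tH 0) = 0 := by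
  rw [rescale_tH]
  norm_num [tK, pochX_zero, one_inv', Sq, vj, poch]

lemma TC0 : tJ 0 - rescale q (tH 0) = 0 := by
  rw [rescale_tH]
  norm_num [tJ, pochX_zero, one_inv']

lemma TB (n : ℕ) : (1 - X) * tH n = tJ n - X * rescale q (tH n) := by
  cases n with
  | zero =>
      rw [rescale_tH]
      simp only [tH, tJ, pochX_zero, one_inv', pow_zero, mul_one, one_mul]
      ring
  | succ n =>
      rw [rescale_tH, tH, tJ]
      have h0 : (1 - X : PowerSeries K) * (pochX 0 (n+1))⁻¹ = (pochX 1 n)⁻¹ := by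
        have h := pochX_inv_mul 0 n
        norm_num at h
        exact h
      have h1 : (pochX 1 n)⁻¹ = (1 - C (q^(1+n)) * X) * (pochX 1 (n+1))⁻¹ :=
        pochX_inv_succ 1 n
      calc (1 - X) * (C (vj (n+1)) * X^(n+1) * (pochX 0 (n+1))⁻¹)
          = C (vj (n+1)) * X^(n+1) * ((1-X) * (pochX 0 (n+1))⁻¹) := by ring
        _ = C (vj (n+1)) * X^(n+1) * ((1 - C (q^(1+n)) * X) * (pochX 1 (n+1))⁻¹) := by
            rw [h0, h1]
        _ = C (vj (n+1)) * X^(n+1) * (pochX 1 (n+1))⁻¹ -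
            X * (C (vj (n+1) * q^(n+1)) * X^(n+1) * (pochX 1 (n+1))⁻¹) := by
            rw [map_mul, map_pow, map_pow]
            ring

lemma TA (n : ℕ) :
    (1 - C q * X) * (tK (n+1) - rescale q (tH (n+1))) = (C q * X) * rescale q (tK n) := by
  rw [rescale_tH, rescale_tK, tK]
  have hp : (1 - C q * X) * (pochX 1 (n+1))⁻¹ = (pochX 2 n)⁻¹ := by
    have h := pochX_inv_mul 1 n
    norm_num at h
    exact h
  calc (1 - C q * X) * (C (q ^ ((n+1)*(n+1+1)/2) * Sq (n+1)) * X^(n+1) * (pochX 1 (n+1))⁻¹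
        - C (vj (n+1) * q^(n+1)) * X^(n+1) * (pochX 1 (n+1))⁻¹)
      = (C (q ^ ((n+1)*(n+1+1)/2) * Sq (n+1)) - C (vj (n+1) * q^(n+1))) * X^(n+1) *
          ((1 - C q * X) * (pochX 1 (n+1))⁻¹) := by ring
    _ = C (q ^ ((n+1)*(n+1+1)/2) * Sq n) * X^(n+1) * (pochX 2 n)⁻¹ := by
        rw [← map_sub, scalarA, hp]
    _ = (C q * X) * (C (q^(n*(n+1)/2) * Sq n * q^n) * X^n * (pochX 2 n)⁻¹) := by
        rw [tri_succ, pow_add]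
        simp only [map_mul, map_pow]
        ring

lemma TC (n : ℕ) :
    (1 - C q * X) * (tJ (n+1) - rescale q (tH (n+1))) = -(X * rescale q (tJ n)) := by
  rw [rescale_tH, rescale_tJ, tJ]
  have hp : (1 - C q * X) * (pochX 1 (n+1))⁻¹ = (pochX 2 n)⁻¹ := by
    have h := pochX_inv_mul 1 n
    norm_num at h
    exact h
  calc (1 - C q * X) * (C (vj (n+1)) * X^(n+1) * (pochX 1 (n+1))⁻¹
        - C (vj (n+1) * q^(n+1)) * X^(n+1) * (pochX 1 (n+1))⁻¹)
      = (C (vj (n+1)) - C (vj (n+1) * q^(n+1))) * X^(n+1) *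
          ((1 - C q * X) * (pochX 1 (n+1))⁻¹) := by ring
    _ = C (-(q^n * vj n)) * X^(n+1) * (pochX 2 n)⁻¹ := by
        rw [← map_sub, show vj (n+1) - vj (n+1) * q^(n+1) = vj (n+1) * (1 - q^(n+1)) by ring,
          vj_rec, hp]
    _ = -(X * (C (vj n * q^n) * X^n * (pochX 2 n)⁻¹)) := by
        simp only [map_neg, map_mul, map_pow]
        ring


def KP (M : ℕ) : PowerSeries K := ∑ n ∈ Finset.range (M+1), tK n
def HP (M : ℕ) : PowerSeries K := ∑ n ∈ Finset.range (M+1), tH n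
def JP (M : ℕ) : PowerSeries K := ∑ n ∈ Finset.range (M+1), tJ n

lemma PA (M : ℕ) :
    (1 - C q * X) * (KP (M+1) - rescale q (HP (M+1))) = (C q * X) * rescale q (KP M) := by
  unfold KP HP
  rw [map_sum, map_sum, ← Finset.sum_sub_distrib, Finset.mul_sum, Finset.mul_sum,
    Finset.sum_range_succ', TA0, mul_zero, add_zero]
  exact Finset.sum_congr rfl fun i _ => TA i

lemma PB (M : ℕ) : (1 - X) * HP M = JP M - X * rescale q (HP M) := by
  unfold HP JP
  rw [map_sum, Finset.mul_sum, Finset.mul_sum, ← Finset.sum_sub_distrib]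
  exact Finset.sum_congr rfl fun n _ => TB n

lemma PC (M : ℕ) :
    (1 - C q * X) * (JP (M+1) - rescale q (HP (M+1))) = -(X * rescale q (JP M)) := by
  unfold JP HP
  rw [map_sum, map_sum, ← Finset.sum_sub_distrib, Finset.mul_sum, Finset.mul_sum,
    Finset.sum_range_succ', TC0, mul_zero, add_zero, ← Finset.sum_neg_distrib]
  exact Finset.sum_congr rfl fun i _ => TC i


lemma coeff_term (a : K) (g : PowerSeries K) (n N : ℕ) :
    coeff N (C a * X^n * g) = if n ≤ N then a * coeff (N-n) g else 0 := by
  rw [show C a * X^n * g = (C a * g) * X^n by ring, PowerSeries.coeff_mul_X_pow']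
  split_ifs with h
  · rw [PowerSeries.coeff_C_mul]
  · rfl

lemma coeff_sum_term (c : ℕ → K) (g : ℕ → PowerSeries K) {N M : ℕ} (h : N ≤ M) :
    coeff N (∑ n ∈ Finset.range (M+1), C (c n) * X^n * g n)
      = ∑ n ∈ Finset.range (N+1), c n * coeff (N-n) (g n) := by
  rw [map_sum]
  rw [Finset.sum_congr rfl fun n (_ : n ∈ Finset.range (M+1)) => coeff_term (c n) (g n) n N]
  rw [← Finset.sum_subset (Finset.range_subset_range.mpr (by omega : N+1 ≤ M+1))
    (fun n _ hn => if_neg (by simp only [Finset.mem_range] at hn; omega))]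
  exact Finset.sum_congr rfl fun n hn =>
    if_pos (by simp only [Finset.mem_range] at hn; omega)

lemma coeff_Kq {N M : ℕ} (h : N ≤ M) : coeff N Kq = coeff N (KP M) := by
  unfold KP tK
  rw [coeff_sum_term _ _ h]
  unfold Kq Sq
  rw [coeff_mk]

lemma coeff_H {N M : ℕ} (h : N ≤ M) : coeff N H = coeff N (HP M) := by
  unfold HP tH
  rw [coeff_sum_term _ _ h]
  unfold H vj
  rw [coeff_mk]

lemma coeff_J {N M : ℕ} (h : N ≤ M) : coeff N J = coeff N (JP M) := by
  unfold JP tJ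
  rw [coeff_sum_term _ _ h]
  unfold J vj
  rw [coeff_mk]

lemma coeff_mul_congr {f g : PowerSeries K} (P : PowerSeries K) (N : ℕ)
    (h : ∀ k, k ≤ N → coeff k f = coeff k g) :
    coeff N (P * f) = coeff N (P * g) := by
  rw [PowerSeries.coeff_mul, PowerSeries.coeff_mul]
  refine Finset.sum_congr rfl fun p hp => ?_
  have hmem := Finset.HasAntidiagonal.mem_antidiagonal.mp hp
  rw [h p.2 (by omega)]


lemma GA : (1 - C q * X) * (Kq - rescale q H) = (C q * X) * rescale q Kq := by
  ext N
  have h1 : ∀ k, k ≤ N → coeff k (Kq - rescale q H)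
      = coeff k (KP (N+1) - rescale q (HP (N+1))) := by
    intro k hk
    simp only [map_sub, coeff_rescale]
    rw [coeff_Kq (show k ≤ N+1 by omega), coeff_H (show k ≤ N+1 by omega)]
  have h2 : ∀ k, k ≤ N → coeff k (rescale q (KP N)) = coeff k (rescale q Kq) := by
    intro k hk
    simp only [coeff_rescale]
    rw [coeff_Kq (show k ≤ N from hk)]
  rw [coeff_mul_congr _ N h1, PA N, coeff_mul_congr _ N h2]

lemma GC : (1 - C q * X) * (J - rescale q H) = -(X * rescale q J) := by
  ext N
  have h1 : ∀ k, k ≤ N → coeff k (J - rescale q H)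
      = coeff k (JP (N+1) - rescale q (HP (N+1))) := by
    intro k hk
    simp only [map_sub, coeff_rescale]
    rw [coeff_J (show k ≤ N+1 by omega), coeff_H (show k ≤ N+1 by omega)]
  have h2 : ∀ k, k ≤ N → coeff k (rescale q (JP N)) = coeff k (rescale q J) := by
    intro k hk
    simp only [coeff_rescale]
    rw [coeff_J (show k ≤ N from hk)]
  rw [coeff_mul_congr _ N h1, PC N, map_neg, map_neg, coeff_mul_congr _ N h2]

lemma GB : (1 - X) * H = J - X * rescale q H := by
  ext N
  have h1 : ∀ k, k ≤ N → coeff k H = coeff k (HP N) := fun k hk => coeff_H hk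
  have h2 : ∀ k, k ≤ N → coeff k (rescale q (HP N)) = coeff k (rescale q H) := by
    intro k hk
    simp only [coeff_rescale]
    rw [coeff_H (show k ≤ N from hk)]
  rw [coeff_mul_congr _ N h1, PB N, map_sub, map_sub, coeff_mul_congr _ N h2,
    coeff_J (le_refl N)]



/-- `K(x) - K(xq) + (xq²/(1-xq²))·K(xq²)
  - (x³q⁶/((1-xq)(1-xq²)(1-xq³)))·K(xq³) = 0`. -/
theorem stmt6 :
    Kq - rescale q Kq
      + PowerSeries.X * PowerSeries.C (q ^ 2) *
          (1 - PowerSeries.C (q ^ 2) * PowerSeries.X)⁻¹ * rescale (q ^ 2) Kq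
      - PowerSeries.X ^ 3 * PowerSeries.C (q ^ 6) *
          ((1 - PowerSeries.C q * PowerSeries.X) *
            (1 - PowerSeries.C (q ^ 2) * PowerSeries.X) *
            (1 - PowerSeries.C (q ^ 3) * PowerSeries.X))⁻¹ * rescale (q ^ 3) Kq
      = 0 := by
  have hq2 : (q * q : K) = q ^ 2 := by rw [pow_two]
  have hq3 : (q ^ 2 * q : K) = q ^ 3 := by ring
  -- shifted versions of GA
  have hGA := GA
  have hGA1 := congrArg (rescale q) GA
  simp only [map_mul, map_sub, map_one, rescale_X, rescale_C', rescale_rescale] at hGA1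
  rw [hq2] at hGA1
  have hGA2 := congrArg (rescale q) hGA1
  simp only [map_mul, map_sub, map_one, rescale_X, rescale_C', rescale_rescale] at hGA2
  rw [hq2, hq3] at hGA2
  -- shifted versions of GB
  have hGB1 := congrArg (rescale q) GB
  simp only [map_mul, map_sub, map_one, rescale_X, rescale_C', rescale_rescale] at hGB1
  rw [hq2] at hGB1
  have hGB2 := congrArg (rescale q) hGB1
  simp only [map_mul, map_sub, map_one, rescale_X, rescale_C', rescale_rescale] at hGB2
  rw [hq2, hq3] at hGB2
  -- shifted version of GC
  have hGC1 := congrArg (rescale q) GC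
  simp only [map_mul, map_sub, map_one, map_neg, rescale_X, rescale_C', rescale_rescale] at hGC1
  rw [hq2] at hGC1
  -- the cleared-denominator identity
  have key : (1 - C q * X) * (1 - (C q)^2 * X) * (1 - (C q)^3 * X) * Kq
      - (1 - C q * X) * (1 - (C q)^2 * X) * (1 - (C q)^3 * X) * rescale q Kq
      + (C q)^2 * X * ((1 - C q * X) * (1 - (C q)^3 * X)) * rescale (q^2) Kq
      - (C q)^6 * X^3 * rescale (q^3) Kq = 0 := by
    linear_combination ((1 - (C q)^2 * X) * (1 - (C q)^3 * X)) * hGA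
      + ((2 * (C q * X) - 1) * (1 - (C q)^3 * X)) * hGA1
      + ((C q)^3 * X^2) * hGA2
      + ((1 - (C q)^3 * X) * (1 - (C q)^2 * X)) * hGB1
      + ((1 - (C q)^3 * X) * (C q * X)) * hGB2
      + (1 - (C q)^3 * X) * hGC1
  simp only [map_pow]
  have hu2 : (1 - (C q)^2 * X) * ((1 - (C q)^2 * X))⁻¹ = 1 :=
    PowerSeries.mul_inv_cancel _ (by simp)
  have hu : ((1 - C q * X) * (1 - (C q)^2 * X) * (1 - (C q)^3 * X)) *
      ((1 - C q * X) * (1 - (C q)^2 * X) * (1 - (C q)^3 * X))⁻¹ = 1 :=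
    PowerSeries.mul_inv_cancel _ (by simp)
  have hne : ((1 - C q * X) * (1 - (C q)^2 * X) * (1 - (C q)^3 * X)) ≠ 0 := by
    intro h0
    have hc : constantCoeff ((1 - C q * X) * (1 - (C q)^2 * X) * (1 - (C q)^3 * X)) = 1 := by
      simp
    rw [h0, map_zero] at hc
    exact zero_ne_one hc
  refine (mul_eq_zero.mp ?_).resolve_right hne
  linear_combination key
    + ((C q)^2 * X * ((1 - C q * X) * (1 - (C q)^3 * X)) * rescale (q^2) Kq) * hu2
    - ((C q)^6 * X^3 * rescale (q^3) Kq) * hu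


end FC
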